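/- The Onsager algebra O is isomorphic as a Lie algebra to the Lie algebra OA presented by two generators A, B subject to the Dolan–Grady relations [A,[A,[A,B]]] = 4[A,B] and [B,[B,[B,A]]] = 4[B,A], via the map sending A ↦ A_0 and B ↦ A_1. -/

import Mathlib

set_option linter.unusedSectionVars false
set_option linter.unusedVariables false
set_option maxHeartbeats 1000000

section OnsAux
variable {k : Type} [Field k] [CharZero k] {L : Type*} [LieRing L] [LieAlgebra k L]

lemma smulN_cancel (c : k) (hc : c ≠ 0) {u v : L} (h : c • u = c • v) : u = v :=
  smul_right_injective L hc h

lemma smul2_cancel {u v : L} (h : (2:k) • u = (2:k) • v) : u = v :=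
  smulN_cancel (2:k) two_ne_zero h

lemma intInd (P : ℤ → Prop) (h0 : P 0) (up : ∀ m, P m → P (m+1))
    (down : ∀ m, P m → P (m-1)) : ∀ m, P m := by
  intro m
  induction m using Int.induction_on with
  | zero => exact h0
  | succ n ih => exact up n ih
  | pred n ih => simpa [sub_eq_add_neg, add_comm] using down (-n) ih

lemma intInd2 (P : ℤ → Prop) (h0 : P 0) (h1 : P 1)
    (up : ∀ m, P m → P (m+1) → P (m+2))
    (down : ∀ m, P m → P (m+1) → P (m-1)) : ∀ m, P m := by
  have key : ∀ m, P m ∧ P (m+1) := by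
    refine intInd _ ⟨h0, h1⟩ (fun m ⟨hm, hm1⟩ => ⟨hm1, ?_⟩) (fun m ⟨hm, hm1⟩ => ⟨down m hm hm1, ?_⟩)
    · rw [show m + 1 + 1 = m + 2 from by ring]; exact up m hm hm1
    · rw [show m - 1 + 1 = m from by ring]; exact hm
  exact fun m => (key m).1

variable (a : ℤ → L)

lemma sk (p q : ℤ) : ⁅a p, a q⁆ = -⁅a q, a p⁆ := (lie_skew (a p) (a q)).symm

/-- expand `⁅Z, ⁅a p, a q⁆⁆` when `Z` acts as a shift-by-`d`. -/
lemma lie_lie_aa (Z : L) (d p q p₁ p₂ q₁ q₂ : ℤ)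
    (hZ : ∀ r, ⁅Z, a r⁆ = (2:k) • a (r+d) - (2:k) • a (r-d))
    (hp₁ : p₁ = p + d) (hp₂ : p₂ = p - d) (hq₁ : q₁ = q + d) (hq₂ : q₂ = q - d) :
    ⁅Z, ⁅a p, a q⁆⁆ = (2:k) • (⁅a p₁, a q⁆ - ⁅a p₂, a q⁆
      + (⁅a p, a q₁⁆ - ⁅a p, a q₂⁆)) := by
  subst hp₁ hp₂ hq₁ hq₂
  rw [leibniz_lie, hZ, hZ]
  simp only [sub_lie, lie_sub, smul_lie, lie_smul, smul_sub, smul_add]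

lemma jac3 (u v w : L) : ⁅⁅u, v⁆, w⁆ = ⁅u, ⁅v, w⁆⁆ - ⁅v, ⁅u, w⁆⁆ := lie_lie u v w

section Base

variable (hR : ∀ m : ℤ, ⁅⁅a 1, a 0⁆, a m⁆ = (2:k) • a (m+1) - (2:k) • a (m-1))

/-- `hR` with explicit output indices. -/
lemma hRn (hRh : ∀ m : ℤ, ⁅⁅a 1, a 0⁆, a m⁆ = (2:k) • a (m+1) - (2:k) • a (m-1))
    (m p q : ℤ) (hp : p = m + 1) (hq : q = m - 1) :
    ⁅⁅a 1, a 0⁆, a m⁆ = (2:k) • a p - (2:k) • a q := by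
  subst hp hq; exact hRh m

variable (hx : ⁅a 0, ⁅a 0, ⁅a 0, a 1⁆⁆⁆ = (4:k) • ⁅a 0, a 1⁆)
variable (hy : ⁅a 1, ⁅a 1, ⁅a 1, a 0⁆⁆⁆ = (4:k) • ⁅a 1, a 0⁆)

include hR

include hy in
lemma L1 : ⁅a 2, a 1⁆ = ⁅a 1, a 0⁆ := by
  have k1 := hRn a hR 1 2 0 (by norm_num) (by norm_num)
  have e1 : ⁅a 1, ⁅a 1, a 0⁆⁆ = -⁅⁅a 1, a 0⁆, a 1⁆ :=
    (lie_skew (a 1) ⁅a 1, a 0⁆).symm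
  have h1 : ⁅a 1, ⁅a 1, a 0⁆⁆ = -((2:k) • a 2 - (2:k) • a 0) := by rw [e1, k1]
  have h2 := hy
  rw [h1] at h2
  have h3 : ⁅a 1, -((2:k) • a 2 - (2:k) • a 0)⁆
      = -((2:k) • ⁅a 1, a 2⁆) + (2:k) • ⁅a 1, a 0⁆ := by
    simp only [lie_neg, lie_sub, lie_smul]; abel
  rw [h3] at h2
  apply smul2_cancel (k := k)
  linear_combination (norm := module) (2:k) • sk a 1 2 + h2

include hx in
lemma L2 : ⁅a 0, a (-1)⁆ = ⁅a 1, a 0⁆ := by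
  have k0 := hRn a hR 0 1 (-1) (by norm_num) (by norm_num)
  have e1 : ⁅a 0, ⁅a 0, a 1⁆⁆ = ⁅⁅a 1, a 0⁆, a 0⁆ := by
    rw [sk a 0 1, lie_neg, lie_skew]
  have h1 : ⁅a 0, ⁅a 0, a 1⁆⁆ = (2:k) • a 1 - (2:k) • a (-1) := e1.trans k0
  have h2 := hx
  rw [h1] at h2
  have h3 : ⁅a 0, (2:k) • a 1 - (2:k) • a (-1)⁆
      = (2:k) • ⁅a 0, a 1⁆ - (2:k) • ⁅a 0, a (-1)⁆ := by
    simp only [lie_sub, lie_smul]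
  rw [h3] at h2
  apply smul2_cancel (k := k)
  linear_combination (norm := module) -h2 - (2:k) • sk a 0 1

include hx hy in
lemma L3 : ⁅a 1, a (-1)⁆ = ⁅a 2, a 0⁆ := by
  have h := lie_lie_aa a ⁅a 1, a 0⁆ 1 1 0 2 0 1 (-1) hR (by ring) (by ring) (by ring) (by ring)
  rw [lie_self ⁅a 1, a 0⁆, lie_self (a 0), lie_self (a 1)] at h
  apply smul2_cancel (k := k)
  linear_combination (norm := module) h

include hy in
lemma L4 : ⁅a 3, a 1⁆ = ⁅a 2, a 0⁆ := by
  have h := lie_lie_aa a ⁅a 1, a 0⁆ 1 2 1 3 1 2 0 hR (by ring) (by ring) (by ring) (by ring)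
  rw [L1 a hR hy, lie_self ⁅a 1, a 0⁆, lie_self (a 1), lie_self (a 2)] at h
  apply smul2_cancel (k := k)
  linear_combination (norm := module) -h

include hx hy in
lemma L5 : ⁅a 0, a (-2)⁆ = ⁅a 2, a 0⁆ := by
  have h := lie_lie_aa a ⁅a 1, a 0⁆ 1 0 (-1) 1 (-1) 0 (-2) hR
    (by ring) (by ring) (by ring) (by ring)
  rw [L2 a hR hx, lie_self ⁅a 1, a 0⁆, lie_self (a 0), lie_self (a (-1))] at h
  have l3 := L3 a hR hx hy
  apply smul2_cancel (k := k)
  linear_combination (norm := module) h + (2:k) • l3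

include hx hy in
lemma Q2_1 : ⁅⁅a 2, a 0⁆, a 1⁆ = (2:k) • a 3 - (2:k) • a (-1) := by
  have k2 := hRn a hR 2 3 1 (by norm_num) (by norm_num)
  have k0 := hRn a hR 0 1 (-1) (by norm_num) (by norm_num)
  have j := jac3 (a 1) (a 0) (a 2)
  rw [sk a 0 2, sk a 1 2, L1 a hR hy] at j
  simp only [lie_neg] at j
  have w1 : ⁅a 1, ⁅a 2, a 0⁆⁆ = -⁅⁅a 2, a 0⁆, a 1⁆ := (lie_skew _ _).symm
  have w2 : ⁅a 0, ⁅a 1, a 0⁆⁆ = -⁅⁅a 1, a 0⁆, a 0⁆ := (lie_skew _ _).symm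
  linear_combination (norm := module) w1 - j + k2 - w2 + k0

include hx hy in
lemma Q2_0 : ⁅⁅a 2, a 0⁆, a 0⁆ = (2:k) • a 2 - (2:k) • a (-2) := by
  have k1 := hRn a hR 1 2 0 (by norm_num) (by norm_num)
  have km1 := hRn a hR (-1) 0 (-2) (by norm_num) (by norm_num)
  have j := jac3 (a 0) (a (-1)) (a 1)
  rw [L2 a hR hx, sk a (-1) 1, L3 a hR hx hy, sk a 0 1] at j
  simp only [lie_neg] at j
  have w1 : ⁅a 0, ⁅a 2, a 0⁆⁆ = -⁅⁅a 2, a 0⁆, a 0⁆ := (lie_skew _ _).symm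
  have w2 : ⁅a (-1), ⁅a 1, a 0⁆⁆ = -⁅⁅a 1, a 0⁆, a (-1)⁆ := (lie_skew _ _).symm
  linear_combination (norm := module) w1 - j + k1 - w2 + km1

end Base

section Main
variable (hR : ∀ m : ℤ, ⁅⁅a 1, a 0⁆, a m⁆ = (2:k) • a (m+1) - (2:k) • a (m-1))
variable (hx : ⁅a 0, ⁅a 0, ⁅a 0, a 1⁆⁆⁆ = (4:k) • ⁅a 0, a 1⁆)
variable (hy : ⁅a 1, ⁅a 1, ⁅a 1, a 0⁆⁆⁆ = (4:k) • ⁅a 1, a 0⁆)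

include hR hx hy

lemma gT : ⁅⁅a 1, a 0⁆, ⁅a 2, a 0⁆⁆ = 0 := by
  have h1 := lie_lie_aa a ⁅a 1, a 0⁆ 1 2 0 3 1 1 (-1) hR (by ring) (by ring) (by ring) (by ring)
  rw [L1 a hR hy] at h1
  have h2 := lie_lie_aa a ⁅a 1, a 0⁆ 1 1 (-1) 2 0 0 (-2) hR (by ring) (by ring) (by ring) (by ring)
  rw [L3 a hR hx hy, L2 a hR hx] at h2
  have h3 := leibniz_lie ⁅a 2, a 0⁆ (a 1) (a 0)
  rw [Q2_1 a hR hx hy, Q2_0 a hR hx hy] at h3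
  simp only [sub_lie, smul_lie, lie_sub, lie_smul] at h3
  have wTS := lie_skew ⁅a 2, a 0⁆ ⁅a 1, a 0⁆
  have x1 : ⁅a (-1), a 0⁆ = -⁅a 1, a 0⁆ := by rw [sk a (-1) 0, L2 a hR hx]
  have z1 : ⁅a 1, a 2⁆ = -⁅a 1, a 0⁆ := by rw [sk a 1 2, L1 a hR hy]
  apply smulN_cancel (3:k) (by norm_num)
  rw [smul_zero]
  linear_combination (norm := module) h1 + h2 - wTS - h3 + (2:k) • x1 - (2:k) • z1

lemma hTS : ⁅⁅a 2, a 0⁆, ⁅a 1, a 0⁆⁆ = 0 := by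
  rw [← lie_skew, gT a hR hx hy, neg_zero]

lemma uEq1 : ⁅a 2, a (-1)⁆ = ⁅a 3, a 0⁆ := by
  have h1 := lie_lie_aa a ⁅a 1, a 0⁆ 1 2 0 3 1 1 (-1) hR (by ring) (by ring) (by ring) (by ring)
  rw [L1 a hR hy] at h1
  apply smul2_cancel (k := k)
  linear_combination (norm := module) h1 - gT a hR hx hy

lemma uEq2 : ⁅a 1, a (-2)⁆ = ⁅a 3, a 0⁆ := by
  have h2 := lie_lie_aa a ⁅a 1, a 0⁆ 1 1 (-1) 2 0 0 (-2) hR (by ring) (by ring) (by ring) (by ring)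
  rw [L3 a hR hx hy, L2 a hR hx] at h2
  apply smul2_cancel (k := k)
  linear_combination (norm := module) h2 - gT a hR hx hy + (2:k) • uEq1 a hR hx hy

end Main

section Shift
variable (hR : ∀ m : ℤ, ⁅⁅a 1, a 0⁆, a m⁆ = (2:k) • a (m+1) - (2:k) • a (m-1))
include hR

/-- If `Z` commutes with `⁅a 1, a 0⁆` and acts as shift-by-`d` at `0` and `1`,
then it acts as a shift-by-`d` everywhere. -/
lemma shift_global (Z : L) (d : ℤ)
    (hcomm : ⁅⁅a 1, a 0⁆, Z⁆ = 0)
    (h0 : ⁅Z, a 0⁆ = (2:k) • a d - (2:k) • a (-d))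
    (h1 : ⁅Z, a 1⁆ = (2:k) • a (1+d) - (2:k) • a (1-d)) :
    ∀ p, ⁅Z, a p⁆ = (2:k) • a (p+d) - (2:k) • a (p-d) := by
  refine intInd2 (fun p => ⁅Z, a p⁆ = (2:k) • a (p+d) - (2:k) • a (p-d)) ?_ ?_ ?_ ?_
  · show ⁅Z, a 0⁆ = (2:k) • a (0+d) - (2:k) • a (0-d)
    rw [show (0:ℤ)+d = d from by ring, show (0:ℤ)-d = -d from by ring]; exact h0
  · exact h1
  · intro m hm' hm1'
    have hm : ⁅Z, a m⁆ = (2:k) • a (m+d) - (2:k) • a (m-d) := hm'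
    have hm1 : ⁅Z, a (m+1)⁆ = (2:k) • a (m+1+d) - (2:k) • a (m+1-d) := hm1'
    show ⁅Z, a (m+2)⁆ = (2:k) • a (m+2+d) - (2:k) • a (m+2-d)
    have h := leibniz_lie ⁅a 1, a 0⁆ Z (a (m+1))
    rw [hcomm, zero_lie, hm1, hRn a hR (m+1) (m+2) m (by ring) (by ring)] at h
    simp only [lie_sub, lie_smul, zero_add] at h
    have kup := hRn a hR (m+1+d) (m+2+d) (m+d) (by ring) (by ring)
    have kdn := hRn a hR (m+1-d) (m+2-d) (m-d) (by ring) (by ring)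
    apply smul2_cancel (k := k)
    linear_combination (norm := module) -h + (2:k) • kup - (2:k) • kdn + (2:k) • hm
  · intro m hm' hm1'
    have hm : ⁅Z, a m⁆ = (2:k) • a (m+d) - (2:k) • a (m-d) := hm'
    have hm1 : ⁅Z, a (m+1)⁆ = (2:k) • a (m+1+d) - (2:k) • a (m+1-d) := hm1'
    show ⁅Z, a (m-1)⁆ = (2:k) • a (m-1+d) - (2:k) • a (m-1-d)
    have h := leibniz_lie ⁅a 1, a 0⁆ Z (a m)
    rw [hcomm, zero_lie, hm, hRn a hR m (m+1) (m-1) (by ring) (by ring)] at h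
    simp only [lie_sub, lie_smul, zero_add] at h
    have k2 := hRn a hR (m+d) (m+1+d) (m-1+d) (by ring) (by ring)
    have km2 := hRn a hR (m-d) (m+1-d) (m-1-d) (by ring) (by ring)
    apply smul2_cancel (k := k)
    linear_combination (norm := module) h - (2:k) • k2 + (2:k) • km2 + (2:k) • hm1

variable (hx : ⁅a 0, ⁅a 0, ⁅a 0, a 1⁆⁆⁆ = (4:k) • ⁅a 0, a 1⁆)
variable (hy : ⁅a 1, ⁅a 1, ⁅a 1, a 0⁆⁆⁆ = (4:k) • ⁅a 1, a 0⁆)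

include hR hx hy

lemma Q2 : ∀ p, ⁅⁅a 2, a 0⁆, a p⁆ = (2:k) • a (p+2) - (2:k) • a (p-2) := by
  refine shift_global a hR ⁅a 2, a 0⁆ 2 (gT a hR hx hy) ?_ ?_
  · rw [show ((-2):ℤ) = -2 from rfl]; exact Q2_0 a hR hx hy
  · have h := Q2_1 a hR hx hy
    rw [show (3:ℤ) = 1+2 from by norm_num, show ((-1):ℤ) = 1-2 from by norm_num] at h
    exact h


lemma windowStep (m : ℤ) (hm : 1 ≤ m)
    (hS : ∀ j, -m ≤ j → j ≤ m → ⁅a (j+1), a j⁆ = ⁅a 1, a 0⁆)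
    (hT : ∀ j, -m-1 ≤ j → j ≤ m → ⁅a (j+2), a j⁆ = ⁅a 2, a 0⁆)
    (hU : ∀ j, -m-1 ≤ j → j ≤ m-1 → ⁅a (j+3), a j⁆ = ⁅a 3, a 0⁆) :
    (∀ j, -m-1 ≤ j → j ≤ m+1 → ⁅a (j+1), a j⁆ = ⁅a 1, a 0⁆) ∧
    (∀ j, -m-2 ≤ j → j ≤ m+1 → ⁅a (j+2), a j⁆ = ⁅a 2, a 0⁆) ∧
    (∀ j, -m-2 ≤ j → j ≤ m → ⁅a (j+3), a j⁆ = ⁅a 3, a 0⁆) := by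
  have q2 := Q2 a hR hx hy
  have gt := gT a hR hx hy
  have ts := hTS a hR hx hy
  have hSm : ⁅a (m+1), a m⁆ = ⁅a 1, a 0⁆ := hS m (by omega) le_rfl
  have hSm1 : ⁅a m, a (m-1)⁆ = ⁅a 1, a 0⁆ := by
    have h := hS (m-1) (by omega) (by omega); rwa [show m-1+1 = m from by ring] at h
  have hTm : ⁅a (m+2), a m⁆ = ⁅a 2, a 0⁆ := hT m (by omega) le_rfl
  have hUm1 : ⁅a (m+2), a (m-1)⁆ = ⁅a 3, a 0⁆ := by
    have h := hU (m-1) (by omega) (by omega); rwa [show m-1+3 = m+2 from by ring] at h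
  have hUm2 : ⁅a (m+1), a (m-2)⁆ = ⁅a 3, a 0⁆ := by
    have h := hU (m-2) (by omega) (by omega); rwa [show m-2+3 = m+1 from by ring] at h
  -- positive frontier
  have h1 := lie_lie_aa a ⁅a 1, a 0⁆ 1 (m+2) m (m+3) (m+1) (m+1) (m-1) hR
    (by ring) (by ring) (by ring) (by ring)
  rw [hTm, gt] at h1
  have h2 := lie_lie_aa a ⁅a 2, a 0⁆ 2 (m+1) m (m+3) (m-1) (m+2) (m-2) q2
    (by ring) (by ring) (by ring) (by ring)
  rw [hSm, ts] at h2
  have hA : ⁅a (m-1), a m⁆ = -⁅a 1, a 0⁆ := by rw [sk a (m-1) m, hSm1]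
  have skf := sk a (m+1) (m+2)
  have newU : ⁅a (m+3), a m⁆ = ⁅a 3, a 0⁆ := by
    apply smulN_cancel (4:k) (by norm_num)
    linear_combination (norm := module) -h1 - h2 + (2:k) • hSm + (2:k) • hUm1
      + (2:k) • hA - (2:k) • skf + (2:k) • hUm2
  have newS : ⁅a (m+2), a (m+1)⁆ = ⁅a 1, a 0⁆ := by
    apply smul2_cancel (k := k)
    linear_combination (norm := module) -h1 + (2:k) • hSm + (2:k) • hUm1 - (2:k) • newU
  have newT : ⁅a (m+3), a (m+1)⁆ = ⁅a 2, a 0⁆ := by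
    have h3 := lie_lie_aa a ⁅a 1, a 0⁆ 1 (m+2) (m+1) (m+3) (m+1) (m+2) m hR
      (by ring) (by ring) (by ring) (by ring)
    rw [newS, lie_self ⁅a 1, a 0⁆] at h3
    have z1 := lie_self (a (m+1))
    have z2 := lie_self (a (m+2))
    apply smul2_cancel (k := k)
    linear_combination (norm := module) -h3 + (2:k) • z1 - (2:k) • z2 + (2:k) • hTm
  -- negative frontier
  have hTneg : ⁅a (-m+1), a (-m-1)⁆ = ⁅a 2, a 0⁆ := by
    have h := hT (-m-1) (by omega) (by omega); rwa [show -m-1+2 = -m+1 from by ring] at h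
  have hUneg1 : ⁅a (-m+2), a (-m-1)⁆ = ⁅a 3, a 0⁆ := by
    have h := hU (-m-1) (by omega) (by omega); rwa [show -m-1+3 = -m+2 from by ring] at h
  have hSneg : ⁅a (-m+1), a (-m)⁆ = ⁅a 1, a 0⁆ := hS (-m) (by omega) (by omega)
  have hUneg0 : ⁅a (-m+3), a (-m)⁆ = ⁅a 3, a 0⁆ := hU (-m) (by omega) (by omega)
  have hSneg2 : ⁅a (-m+2), a (-m+1)⁆ = ⁅a 1, a 0⁆ := by
    have h := hS (-m+1) (by omega) (by omega); rwa [show -m+1+1 = -m+2 from by ring] at h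
  have g1 := lie_lie_aa a ⁅a 1, a 0⁆ 1 (-m+1) (-m-1) (-m+2) (-m) (-m) (-m-2) hR
    (by ring) (by ring) (by ring) (by ring)
  rw [hTneg, gt] at g1
  have g2 := lie_lie_aa a ⁅a 2, a 0⁆ 2 (-m+1) (-m) (-m+3) (-m-1) (-m+2) (-m-2) q2
    (by ring) (by ring) (by ring) (by ring)
  rw [hSneg, ts] at g2
  have hA2 := sk a (-m-1) (-m)
  have hB2 : ⁅a (-m+1), a (-m+2)⁆ = -⁅a 1, a 0⁆ := by rw [sk a (-m+1) (-m+2), hSneg2]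
  have newSneg : ⁅a (-m), a (-m-1)⁆ = ⁅a 1, a 0⁆ := by
    apply smulN_cancel (4:k) (by norm_num)
    linear_combination (norm := module) g1 - g2 + (2:k) • hUneg1 - (2:k) • hUneg0
      + (2:k) • hSneg + (2:k) • hA2 - (2:k) • hB2
  have newUneg : ⁅a (-m+1), a (-m-2)⁆ = ⁅a 3, a 0⁆ := by
    apply smul2_cancel (k := k)
    linear_combination (norm := module) g1 + (2:k) • hUneg1 - (2:k) • newSneg + (2:k) • hSneg
  have newTneg : ⁅a (-m), a (-m-2)⁆ = ⁅a 2, a 0⁆ := by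
    have g3 := lie_lie_aa a ⁅a 1, a 0⁆ 1 (-m) (-m-1) (-m+1) (-m-1) (-m) (-m-2) hR
      (by ring) (by ring) (by ring) (by ring)
    rw [newSneg, lie_self ⁅a 1, a 0⁆] at g3
    have z3 := lie_self (a (-m-1))
    have z4 := lie_self (a (-m))
    apply smul2_cancel (k := k)
    linear_combination (norm := module) g3 + (2:k) • hTneg - (2:k) • z3 + (2:k) • z4
  refine ⟨?_, ?_, ?_⟩
  · intro j l u
    rcases (show j = m+1 ∨ j = -m-1 ∨ (-m ≤ j ∧ j ≤ m) from by omega) with rfl | rfl | ⟨l2, u2⟩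
    · rw [show m+1+1 = m+2 from by ring]; exact newS
    · rw [show -m-1+1 = -m from by ring]; exact newSneg
    · exact hS j l2 u2
  · intro j l u
    rcases (show j = m+1 ∨ j = -m-2 ∨ (-m-1 ≤ j ∧ j ≤ m) from by omega) with rfl | rfl | ⟨l2, u2⟩
    · rw [show m+1+2 = m+3 from by ring]; exact newT
    · rw [show -m-2+2 = -m from by ring]; exact newTneg
    · exact hT j l2 u2
  · intro j l u
    rcases (show j = m ∨ j = -m-2 ∨ (-m-1 ≤ j ∧ j ≤ m-1) from by omega) with rfl | rfl | ⟨l2, u2⟩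
    · exact newU
    · rw [show -m-2+3 = -m+1 from by ring]; exact newUneg
    · exact hU j l2 u2

lemma window : ∀ n : ℕ,
    (∀ j : ℤ, -(n:ℤ)-1 ≤ j → j ≤ (n:ℤ)+1 → ⁅a (j+1), a j⁆ = ⁅a 1, a 0⁆) ∧
    (∀ j : ℤ, -(n:ℤ)-2 ≤ j → j ≤ (n:ℤ)+1 → ⁅a (j+2), a j⁆ = ⁅a 2, a 0⁆) ∧
    (∀ j : ℤ, -(n:ℤ)-2 ≤ j → j ≤ (n:ℤ) → ⁅a (j+3), a j⁆ = ⁅a 3, a 0⁆) := by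
  intro n
  induction n with
  | zero =>
    refine ⟨?_, ?_, ?_⟩ <;> intro j l u
    · rcases (show j = -1 ∨ j = 0 ∨ j = 1 from by omega) with rfl | rfl | rfl
      · rw [show (-1:ℤ)+1 = 0 from by norm_num]; exact L2 a hR hx
      · rw [show (0:ℤ)+1 = 1 from by norm_num]
      · rw [show (1:ℤ)+1 = 2 from by norm_num]; exact L1 a hR hy
    · rcases (show j = -2 ∨ j = -1 ∨ j = 0 ∨ j = 1 from by omega) with rfl | rfl | rfl | rfl
      · rw [show (-2:ℤ)+2 = 0 from by norm_num]; exact L5 a hR hx hy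
      · rw [show (-1:ℤ)+2 = 1 from by norm_num]; exact L3 a hR hx hy
      · rw [show (0:ℤ)+2 = 2 from by norm_num]
      · rw [show (1:ℤ)+2 = 3 from by norm_num]; exact L4 a hR hy
    · rcases (show j = -2 ∨ j = -1 ∨ j = 0 from by omega) with rfl | rfl | rfl
      · rw [show (-2:ℤ)+3 = 1 from by norm_num]; exact uEq2 a hR hx hy
      · rw [show (-1:ℤ)+3 = 2 from by norm_num]; exact uEq1 a hR hx hy
      · rw [show (0:ℤ)+3 = 3 from by norm_num]
  | succ n ih =>
    obtain ⟨ihS, ihT, ihU⟩ := ih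
    have step := windowStep a hR hx hy ((n:ℤ)+1) (by omega)
      (fun j l u => ihS j (by omega) (by omega))
      (fun j l u => ihT j (by omega) (by omega))
      (fun j l u => ihU j (by omega) (by omega))
    obtain ⟨sS, sT, sU⟩ := step
    refine ⟨fun j l u => sS j (by push_cast at l ⊢; omega) (by push_cast at u ⊢; omega),
      fun j l u => sT j (by push_cast at l ⊢; omega) (by push_cast at u ⊢; omega),
      fun j l u => sU j (by push_cast at l ⊢; omega) (by push_cast at u ⊢; omega)⟩

lemma P1 : ∀ j : ℤ, ⁅a (j+1), a j⁆ = ⁅a 1, a 0⁆ := by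
  intro j
  exact (window a hR hx hy (j.natAbs + 1)).1 j (by omega) (by omega)


lemma levelStep (N : ℤ) (hN : 1 ≤ N)
    (hP' : ∀ m : ℤ, ⁅a (m+(N-1)), a m⁆ = ⁅a (N-1), a 0⁆)
    (hP : ∀ m : ℤ, ⁅a (m+N), a m⁆ = ⁅a N, a 0⁆)
    (hQ : ∀ r : ℤ, ⁅⁅a N, a 0⁆, a r⁆ = (2:k) • a (r+N) - (2:k) • a (r-N)) :
    (∀ m : ℤ, ⁅a (m+(N+1)), a m⁆ = ⁅a (N+1), a 0⁆) ∧
    (∀ r : ℤ, ⁅⁅a (N+1), a 0⁆, a r⁆ = (2:k) • a (r+(N+1)) - (2:k) • a (r-(N+1))) := by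
  have p1 := P1 a hR hx hy
  set e := (2:k)⁻¹ • ⁅⁅a 1, a 0⁆, ⁅a N, a 0⁆⁆ with he
  have he2 : ⁅⁅a 1, a 0⁆, ⁅a N, a 0⁆⁆ = (2:k) • e := (smul_inv_smul₀ two_ne_zero _).symm
  have trans : ∀ m : ℤ, ⁅a (m+N+1), a m⁆ = ⁅a (m+N), a (m-1)⁆ + e := by
    intro m
    have h := lie_lie_aa a ⁅a 1, a 0⁆ 1 (m+N) m (m+N+1) (m+N-1) (m+1) (m-1) hR
      (by ring) (by ring) (by ring) (by ring)
    rw [hP m, he2] at h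
    have e1 : ⁅a (m+N-1), a m⁆ = ⁅a (N-1), a 0⁆ := by
      have h2 := hP' m; rwa [show m+(N-1) = m+N-1 from by ring] at h2
    have e2 : ⁅a (m+N), a (m+1)⁆ = ⁅a (N-1), a 0⁆ := by
      have h2 := hP' (m+1); rwa [show m+1+(N-1) = m+N from by ring] at h2
    apply smul2_cancel (k := k)
    linear_combination (norm := module) -h + (2:k) • e1 - (2:k) • e2
  have dLem : ∀ m : ℤ, ⁅a (m+N+1), a m⁆ = ⁅a (N+1), a 0⁆ + (m:k) • e := by
    refine intInd _ ?_ ?_ ?_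
    · rw [show (0:ℤ)+N+1 = N+1 from by ring]
      norm_num
    · intro m ih
      have t := trans (m+1)
      rw [show m+1+N = m+N+1 from by ring, show m+1-1 = m from by ring] at t
      rw [show m+1+N+1 = m+N+1+1 from by ring, t, ih]
      push_cast
      module
    · intro m ih
      have t := trans m
      rw [show m-1+N+1 = m+N from by ring]
      push_cast
      linear_combination (norm := module) -t + ih
  -- show e = 0
  have q1 := hQ 1
  rw [show (1:ℤ)+N = 1+N from rfl, show (1:ℤ)-N = 1-N from rfl] at q1
  have q0 := hQ 0
  rw [show (0:ℤ)+N = N from by ring, show (0:ℤ)-N = -N from by ring] at q0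
  have h := leibniz_lie ⁅a N, a 0⁆ (a 1) (a 0)
  rw [q1, q0] at h
  simp only [sub_lie, smul_lie, lie_sub, lie_smul] at h
  have f1 : ⁅a (1+N), a 0⁆ = ⁅a (N+1), a 0⁆ := by
    have h2 := dLem 0
    rw [show (0:ℤ)+N+1 = 1+N from by ring] at h2
    simpa using h2
  have f2 : ⁅a (1-N), a 0⁆ = -⁅a (N-1), a 0⁆ := by
    have h2 := hP' (1-N)
    rw [show 1-N+(N-1) = 0 from by ring] at h2
    rw [sk a (1-N) 0, h2]
  have f3 : ⁅a 1, a N⁆ = -⁅a (N-1), a 0⁆ := by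
    have h2 := hP' 1
    rw [show 1+(N-1) = N from by ring] at h2
    rw [sk a 1 N, h2]
  have f4 : ⁅a 1, a (-N)⁆ = ⁅a (N+1), a 0⁆ - (N:k) • e := by
    have h2 := dLem (-N)
    rw [show -N+N+1 = 1 from by ring] at h2
    rw [h2]
    push_cast
    module
  have wS := lie_skew ⁅a N, a 0⁆ ⁅a 1, a 0⁆
  have he0 : e = 0 := by
    apply smulN_cancel ((2:k) * ((N:k) + 1))
      (mul_ne_zero two_ne_zero (by exact_mod_cast (show ((N+1:ℤ):k) ≠ 0 from
        Int.cast_ne_zero.mpr (by omega))))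
    rw [smul_zero]
    linear_combination (norm := module) -h - wS - he2 - (2:k) • f1 + (2:k) • f2
      - (2:k) • f3 + (2:k) • f4
  have hPN1 : ∀ m : ℤ, ⁅a (m+(N+1)), a m⁆ = ⁅a (N+1), a 0⁆ := by
    intro m
    have h2 := dLem m
    rw [he0, smul_zero, add_zero] at h2
    rwa [show m+(N+1) = m+N+1 from by ring]
  refine ⟨hPN1, ?_⟩
  intro r
  have base := hQ (r-1)
  have hW : ⁅a N, a 0⁆ = ⁅a (r+N), a r⁆ := (hP r).symm
  rw [hW, jac3] at base
  have pS : ⁅a r, a (r-1)⁆ = ⁅a 1, a 0⁆ := by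
    have h2 := p1 (r-1); rwa [show r-1+1 = r from by ring] at h2
  have hv : ⁅a (r+N), a (r-1)⁆ = ⁅a (N+1), a 0⁆ := by
    have h2 := hPN1 (r-1); rwa [show r-1+(N+1) = r+N from by ring] at h2
  rw [pS, hv] at base
  have w1 := lie_skew (a (r+N)) ⁅a 1, a 0⁆
  have kS := hRn a hR (r+N) (r+1+N) (r-1+N) (by ring) (by ring)
  have w2 := lie_skew ⁅a (N+1), a 0⁆ (a r)
  rw [show r+(N+1) = r+1+N from by ring, show r-(N+1) = r-1-N from by ring]
  linear_combination (norm := module) base + w1 + kS - w2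

lemma PQall : ∀ N : ℤ, 0 ≤ N →
    (∀ m : ℤ, ⁅a (m+N), a m⁆ = ⁅a N, a 0⁆) ∧
    (∀ r : ℤ, ⁅⁅a N, a 0⁆, a r⁆ = (2:k) • a (r+N) - (2:k) • a (r-N)) := by
  have base0 : (∀ m : ℤ, ⁅a (m+(0:ℤ)), a m⁆ = ⁅a (0:ℤ), a 0⁆) ∧
      (∀ r : ℤ, ⁅⁅a (0:ℤ), a 0⁆, a r⁆ = (2:k) • a (r+(0:ℤ)) - (2:k) • a (r-(0:ℤ))) := by
    constructor
    · intro m; rw [add_zero, lie_self, lie_self]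
    · intro r; rw [lie_self, zero_lie, add_zero, sub_zero, sub_self]
  have base1 : (∀ m : ℤ, ⁅a (m+(1:ℤ)), a m⁆ = ⁅a (1:ℤ), a 0⁆) ∧
      (∀ r : ℤ, ⁅⁅a (1:ℤ), a 0⁆, a r⁆ = (2:k) • a (r+(1:ℤ)) - (2:k) • a (r-(1:ℤ))) :=
    ⟨P1 a hR hx hy, hR⟩
  have key : ∀ n : ℕ,
      ((∀ m : ℤ, ⁅a (m+(n:ℤ)), a m⁆ = ⁅a (n:ℤ), a 0⁆) ∧
       (∀ r : ℤ, ⁅⁅a (n:ℤ), a 0⁆, a r⁆ = (2:k) • a (r+(n:ℤ)) - (2:k) • a (r-(n:ℤ)))) ∧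
      ((∀ m : ℤ, ⁅a (m+((n:ℤ)+1)), a m⁆ = ⁅a ((n:ℤ)+1), a 0⁆) ∧
       (∀ r : ℤ, ⁅⁅a ((n:ℤ)+1), a 0⁆, a r⁆ = (2:k) • a (r+((n:ℤ)+1)) - (2:k) • a (r-((n:ℤ)+1)))) := by
    intro n
    induction n with
    | zero => push_cast; exact ⟨base0, base1⟩
    | succ n ih =>
      push_cast
      refine ⟨ih.2, ?_⟩
      have hP' : ∀ m : ℤ, ⁅a (m+(((n:ℤ)+1)-1)), a m⁆ = ⁅a (((n:ℤ)+1)-1), a 0⁆ := by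
        intro m
        rw [show (n:ℤ)+1-1 = (n:ℤ) from by ring]
        exact ih.1.1 m
      exact levelStep a hR hx hy ((n:ℤ)+1) (by omega) hP' ih.2.1 ih.2.2
  intro N hN
  lift N to ℕ using hN with n
  exact (key n).1

/-- translation invariance : `⁅a l, a m⁆ = ⁅a (l-m), a 0⁆` for all `l m`. -/
lemma T1' : ∀ l m : ℤ, ⁅a l, a m⁆ = ⁅a (l-m), a 0⁆ := by
  intro l m
  rcases le_or_gt m l with hle | hlt
  · have h := (PQall a hR hx hy (l-m) (by omega)).1 m
    rwa [show m+(l-m) = l from by ring] at h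
  · have h := (PQall a hR hx hy (m-l) (by omega)).1 l
    rw [show l+(m-l) = m from by ring] at h
    have h0 := (PQall a hR hx hy (m-l) (by omega)).1 (l-m)
    rw [show l-m+(m-l) = 0 from by ring] at h0
    rw [sk a l m, h, sk a (l-m) 0, h0]

/-- `⁅a d, a 0⁆` acts as shift by `d`, for `d ≥ 0`. -/
lemma QTall (d : ℤ) (hd : 0 ≤ d) :
    ∀ r : ℤ, ⁅⁅a d, a 0⁆, a r⁆ = (2:k) • a (r+d) - (2:k) • a (r-d) :=
  (PQall a hR hx hy d hd).2

/-- the `G`'s commute. -/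
lemma T3' (d e : ℤ) (hd : 0 ≤ d) :
    ⁅⁅a d, a 0⁆, ⁅a e, a 0⁆⁆ = 0 := by
  have h := lie_lie_aa a ⁅a d, a 0⁆ d e 0 (e+d) (e-d) d (-d) (QTall a hR hx hy d hd)
    (by ring) (by ring) (by ring) (by ring)
  have c1 : ⁅a e, a d⁆ = ⁅a (e-d), a 0⁆ := T1' a hR hx hy e d
  have d1 : ⁅a e, a (-d)⁆ = ⁅a (e+d), a 0⁆ := by
    have h2 := T1' a hR hx hy e (-d)
    rwa [show e - -d = e+d from by ring] at h2
  linear_combination (norm := module) h + (2:k) • c1 - (2:k) • d1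

end Shift

section Construct

variable (x y : L)

noncomputable def gel : L := (2:k)⁻¹ • ⁅y, x⁆

noncomputable def bseq : ℕ → L
  | 0 => x
  | 1 => y
  | (n+2) => bseq n + ⁅gel (k := k) x y, bseq (n+1)⁆

noncomputable def dseq : ℕ → L
  | 0 => x
  | 1 => y - ⁅gel (k := k) x y, x⁆
  | (n+2) => dseq n - ⁅gel (k := k) x y, dseq (n+1)⁆

noncomputable def aseq : ℤ → L
  | .ofNat n => bseq (k := k) x y n
  | .negSucc n => dseq (k := k) x y (n+1)

variable (k)

lemma aseq_zero : aseq (k := k) x y 0 = x := rfl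

lemma aseq_one : aseq (k := k) x y 1 = y := rfl

lemma aseq_natCast (n : ℕ) : aseq (k := k) x y (n : ℤ) = bseq (k := k) x y n := rfl

lemma aseq_negSucc (n : ℕ) : aseq (k := k) x y (Int.negSucc n) = dseq (k := k) x y (n+1) := rfl

lemma aseq_negCast (n : ℕ) : aseq (k := k) x y (-(n : ℤ)) = dseq (k := k) x y n := by
  cases n with
  | zero => rfl
  | succ i => rfl

lemma bseq_add2 (n : ℕ) : bseq (k := k) x y (n+2)
    = bseq (k := k) x y n + ⁅gel (k := k) x y, bseq (k := k) x y (n+1)⁆ := rfl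

lemma dseq_add2 (n : ℕ) : dseq (k := k) x y (n+2)
    = dseq (k := k) x y n - ⁅gel (k := k) x y, dseq (k := k) x y (n+1)⁆ := rfl

lemma dseq_one : dseq (k := k) x y 1 = y - ⁅gel (k := k) x y, x⁆ := rfl

lemma gel_R : ∀ m : ℤ, ⁅gel (k := k) x y, aseq (k := k) x y m⁆
    = aseq (k := k) x y (m+1) - aseq (k := k) x y (m-1) := by
  intro m
  cases m with
  | ofNat n =>
    cases n with
    | zero =>
      rw [show Int.ofNat 0 = ((0:ℕ) : ℤ) from rfl]
      rw [show ((0:ℕ):ℤ) + 1 = ((1:ℕ):ℤ) from by norm_num,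
        show ((0:ℕ):ℤ) - 1 = -((1:ℕ):ℤ) from by norm_num]
      rw [aseq_natCast, aseq_natCast, aseq_negCast]
      rw [dseq_one, show bseq (k := k) x y 1 = y from rfl]
      show ⁅gel (k := k) x y, x⁆ = _
      abel
    | succ i =>
      rw [show Int.ofNat (i+1) = ((i+1:ℕ) : ℤ) from rfl]
      rw [show ((i+1:ℕ):ℤ) + 1 = ((i+2:ℕ):ℤ) from by push_cast; ring,
        show ((i+1:ℕ):ℤ) - 1 = ((i:ℕ):ℤ) from by push_cast; ring]
      rw [aseq_natCast, aseq_natCast, aseq_natCast, bseq_add2]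
      abel
  | negSucc n =>
    rw [aseq_negSucc]
    rw [show Int.negSucc n + 1 = -((n:ℕ) : ℤ) from by rw [Int.negSucc_eq]; push_cast; ring,
      show Int.negSucc n - 1 = -((n+2:ℕ) : ℤ) from by rw [Int.negSucc_eq]; push_cast; ring]
    rw [aseq_negCast, aseq_negCast, dseq_add2]
    abel

lemma aseq_hR : ∀ m : ℤ, ⁅⁅aseq (k := k) x y 1, aseq (k := k) x y 0⁆, aseq (k := k) x y m⁆
    = (2:k) • aseq (k := k) x y (m+1) - (2:k) • aseq (k := k) x y (m-1) := by
  have hg : ⁅aseq (k := k) x y 1, aseq (k := k) x y 0⁆ = (2:k) • gel (k := k) x y := by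
    rw [aseq_one, aseq_zero]
    exact (smul_inv_smul₀ two_ne_zero _).symm
  intro m
  rw [hg, smul_lie, gel_R, smul_sub]

end Construct
end OnsAux


variable (k : Type) [Field k] [CharZero k]

/-- The Lie ideal of the free Lie algebra on two generators `A = of 0`, `B = of 1`
generated by the two Dolan–Grady relators
`[A,[A,[A,B]]] - 4[A,B]` and `[B,[B,[B,A]]] - 4[B,A]`. -/
noncomputable def DGideal : LieIdeal k (FreeLieAlgebra k (Fin 2)) :=
  LieSubmodule.lieSpan k _
    {⁅FreeLieAlgebra.of k (0 : Fin 2), ⁅FreeLieAlgebra.of k (0 : Fin 2),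
        ⁅FreeLieAlgebra.of k (0 : Fin 2), FreeLieAlgebra.of k (1 : Fin 2)⁆⁆⁆ -
        (4 : k) • ⁅FreeLieAlgebra.of k (0 : Fin 2), FreeLieAlgebra.of k (1 : Fin 2)⁆,
      ⁅FreeLieAlgebra.of k (1 : Fin 2), ⁅FreeLieAlgebra.of k (1 : Fin 2),
        ⁅FreeLieAlgebra.of k (1 : Fin 2), FreeLieAlgebra.of k (0 : Fin 2)⁆⁆⁆ -
        (4 : k) • ⁅FreeLieAlgebra.of k (1 : Fin 2), FreeLieAlgebra.of k (0 : Fin 2)⁆}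

/-- The Dolan–Grady algebra `OA`: the quotient of the free Lie algebra on generators `A, B`
by the ideal generated by the Dolan–Grady relations. -/
noncomputable abbrev DGAlgebra := FreeLieAlgebra k (Fin 2) ⧸ DGideal k

/-- The Onsager algebra `O` (with basis `{A_m} ∪ {G_l}` and Onsager's relations) is
isomorphic as a Lie algebra to the Dolan–Grady algebra `OA`, via the map sending
`A ↦ A_0` and `B ↦ A_1`. -/
theorem stmt_6 {O : Type*} [LieRing O] [LieAlgebra k O]
    (A G : ℤ → O)
    (bas : Module.Basis (ℤ ⊕ {l : ℤ // 0 < l}) k O)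
    (hbas : ∀ i, bas i = Sum.elim A (fun l => G l.1) i)
    (hG0 : G 0 = 0) (hGneg : ∀ m : ℤ, G (-m) = -G m)
    (hAA : ∀ l m : ℤ, m < l → ⁅A l, A m⁆ = (2 : k) • G (l - m))
    (hGA : ∀ l m : ℤ, 0 < l → ⁅G l, A m⁆ = A (m + l) - A (m - l))
    (hGG : ∀ l m : ℤ, 0 < l → 0 < m → ⁅G l, G m⁆ = 0) :
    ∃ Φ : DGAlgebra k ≃ₗ⁅k⁆ O,
      Φ (LieSubmodule.Quotient.mk (N := DGideal k) (FreeLieAlgebra.of k (0 : Fin 2))) = A 0 ∧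
      Φ (LieSubmodule.Quotient.mk (N := DGideal k) (FreeLieAlgebra.of k (1 : Fin 2))) = A 1 := by
  classical
  set θ : FreeLieAlgebra k (Fin 2) →ₗ⁅k⁆ O :=
    FreeLieAlgebra.lift k (fun i : Fin 2 => if i = 0 then A 0 else A 1) with hθ
  have θ0 : θ (FreeLieAlgebra.of k (0 : Fin 2)) = A 0 := by
    rw [hθ, FreeLieAlgebra.lift_of_apply]; simp
  have θ1 : θ (FreeLieAlgebra.of k (1 : Fin 2)) = A 1 := by
    rw [hθ, FreeLieAlgebra.lift_of_apply]; simp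
  -- Onsager relations, low degree
  have c10 : ⁅A 1, A 0⁆ = (2:k) • G 1 := by have h := hAA 1 0 (by norm_num); simpa using h
  have c01 : ⁅A 0, A 1⁆ = -((2:k) • G 1) := by rw [← lie_skew (A 0) (A 1), c10]
  have g10 : ⁅G 1, A 0⁆ = A 1 - A (-1) := by have h := hGA 1 0 (by norm_num); simpa using h
  have g11 : ⁅G 1, A 1⁆ = A 2 - A 0 := by have h := hGA 1 1 (by norm_num); simpa using h
  have c0m1 : ⁅A 0, A (-1)⁆ = (2:k) • G 1 := by have h := hAA 0 (-1) (by norm_num); simpa using h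
  have c21 : ⁅A 2, A 1⁆ = (2:k) • G 1 := by have h := hAA 2 1 (by norm_num); simpa using h
  have hO1 : ⁅A 0, ⁅A 0, ⁅A 0, A 1⁆⁆⁆ = (4:k) • ⁅A 0, A 1⁆ := by
    have i2 : ⁅A 0, ⁅A 0, A 1⁆⁆ = (2:k) • (A 1 - A (-1)) := by
      rw [c01, lie_neg, lie_smul,
        show ⁅A 0, G 1⁆ = -⁅G 1, A 0⁆ from by rw [← lie_skew], g10]
      module
    have i3 : ⁅A 0, ⁅A 0, ⁅A 0, A 1⁆⁆⁆ = (2:k) • (⁅A 0, A 1⁆ - ⁅A 0, A (-1)⁆) := by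
      rw [i2, lie_smul, lie_sub]
    rw [i3, c01, c0m1]
    module
  have hO2 : ⁅A 1, ⁅A 1, ⁅A 1, A 0⁆⁆⁆ = (4:k) • ⁅A 1, A 0⁆ := by
    have i2 : ⁅A 1, ⁅A 1, A 0⁆⁆ = -((2:k) • (A 2 - A 0)) := by
      rw [c10, lie_smul,
        show ⁅A 1, G 1⁆ = -⁅G 1, A 1⁆ from by rw [← lie_skew], g11]
      module
    have c12 : ⁅A 1, A 2⁆ = -((2:k) • G 1) := by
      rw [show ⁅A 1, A 2⁆ = -⁅A 2, A 1⁆ from by rw [← lie_skew], c21]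
    rw [i2, lie_neg, lie_smul, lie_sub, c12, c10]
    module
  -- the ideal dies
  have hle : DGideal k ≤ θ.ker := by
    unfold DGideal
    refine LieSubmodule.lieSpan_le.mpr ?_
    rintro z hz
    simp only [Set.mem_insert_iff, Set.mem_singleton_iff] at hz
    rw [SetLike.mem_coe, LieHom.mem_ker]
    rcases hz with rfl | rfl
    · rw [map_sub, map_smul]
      simp only [LieHom.map_lie, θ0, θ1]
      rw [sub_eq_zero]
      exact hO1
    · rw [map_sub, map_smul]
      simp only [LieHom.map_lie, θ0, θ1]
      rw [sub_eq_zero]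
      exact hO2
  have hle' : (DGideal k).toSubmodule ≤ LinearMap.ker θ.toLinearMap := by
    intro z hz
    rw [LinearMap.mem_ker]
    exact LieHom.mem_ker.mp (hle hz)
  let Φlin : DGAlgebra k →ₗ[k] O := Submodule.liftQ _ θ.toLinearMap hle'
  have Φmk : ∀ w, Φlin (LieSubmodule.Quotient.mk (N := DGideal k) w) = θ w := fun w => rfl
  let Φ₀ : DGAlgebra k →ₗ⁅k⁆ O :=
    { Φlin with
      map_lie' := by
        intro z w
        obtain ⟨z, rfl⟩ := Submodule.Quotient.mk_surjective _ z
        obtain ⟨w, rfl⟩ := Submodule.Quotient.mk_surjective _ w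
        show Φlin ⁅LieSubmodule.Quotient.mk (N := DGideal k) z,
          LieSubmodule.Quotient.mk (N := DGideal k) w⁆ = ⁅Φlin _, Φlin _⁆
        rw [← LieSubmodule.Quotient.mk_bracket, Φmk, Φmk, Φmk, LieHom.map_lie] }
  have Φ₀mk : ∀ w, Φ₀ (LieSubmodule.Quotient.mk (N := DGideal k) w) = θ w := Φmk
  set α : DGAlgebra k := LieSubmodule.Quotient.mk (N := DGideal k)
    (FreeLieAlgebra.of k (0 : Fin 2)) with hαdef
  set β : DGAlgebra k := LieSubmodule.Quotient.mk (N := DGideal k)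
    (FreeLieAlgebra.of k (1 : Fin 2)) with hβdef
  -- DG relations in the quotient
  have relmem1 : (⁅FreeLieAlgebra.of k (0 : Fin 2), ⁅FreeLieAlgebra.of k (0 : Fin 2),
        ⁅FreeLieAlgebra.of k (0 : Fin 2), FreeLieAlgebra.of k (1 : Fin 2)⁆⁆⁆ -
        (4 : k) • ⁅FreeLieAlgebra.of k (0 : Fin 2), FreeLieAlgebra.of k (1 : Fin 2)⁆) ∈
      DGideal k := by
    unfold DGideal
    exact LieSubmodule.subset_lieSpan (Set.mem_insert _ _)
  have relmem2 : (⁅FreeLieAlgebra.of k (1 : Fin 2), ⁅FreeLieAlgebra.of k (1 : Fin 2),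
        ⁅FreeLieAlgebra.of k (1 : Fin 2), FreeLieAlgebra.of k (0 : Fin 2)⁆⁆⁆ -
        (4 : k) • ⁅FreeLieAlgebra.of k (1 : Fin 2), FreeLieAlgebra.of k (0 : Fin 2)⁆) ∈
      DGideal k := by
    unfold DGideal
    exact LieSubmodule.subset_lieSpan (Set.mem_insert_of_mem _ rfl)
  have hxq : ⁅α, ⁅α, ⁅α, β⁆⁆⁆ = (4:k) • ⁅α, β⁆ := by
    have h0 := (LieSubmodule.Quotient.mk_eq_zero' (N := DGideal k)).mpr relmem1
    rw [show (LieSubmodule.Quotient.mk (N := DGideal k)) = Submodule.Quotient.mk from rfl] at h0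
    rw [Submodule.Quotient.mk_sub, Submodule.Quotient.mk_smul] at h0
    rw [show (Submodule.Quotient.mk : FreeLieAlgebra k (Fin 2) → DGAlgebra k)
      = LieSubmodule.Quotient.mk (N := DGideal k) from rfl] at h0
    simp only [LieSubmodule.Quotient.mk_bracket] at h0
    rw [← hαdef, ← hβdef] at h0
    rw [sub_eq_zero] at h0
    exact h0
  have hyq : ⁅β, ⁅β, ⁅β, α⁆⁆⁆ = (4:k) • ⁅β, α⁆ := by
    have h0 := (LieSubmodule.Quotient.mk_eq_zero' (N := DGideal k)).mpr relmem2
    rw [show (LieSubmodule.Quotient.mk (N := DGideal k)) = Submodule.Quotient.mk from rfl] at h0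
    rw [Submodule.Quotient.mk_sub, Submodule.Quotient.mk_smul] at h0
    rw [show (Submodule.Quotient.mk : FreeLieAlgebra k (Fin 2) → DGAlgebra k)
      = LieSubmodule.Quotient.mk (N := DGideal k) from rfl] at h0
    simp only [LieSubmodule.Quotient.mk_bracket] at h0
    rw [← hαdef, ← hβdef] at h0
    rw [sub_eq_zero] at h0
    exact h0
  -- the sequence in the quotient
  set aD : ℤ → DGAlgebra k := aseq (k := k) α β with haD
  have hRD : ∀ m : ℤ, ⁅⁅aD 1, aD 0⁆, aD m⁆ = (2:k) • aD (m+1) - (2:k) • aD (m-1) :=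
    aseq_hR k α β
  have ha0 : aD 0 = α := aseq_zero k α β
  have ha1 : aD 1 = β := aseq_one k α β
  have hxD : ⁅aD 0, ⁅aD 0, ⁅aD 0, aD 1⁆⁆⁆ = (4:k) • ⁅aD 0, aD 1⁆ := by
    rw [ha0, ha1]; exact hxq
  have hyD : ⁅aD 1, ⁅aD 1, ⁅aD 1, aD 0⁆⁆⁆ = (4:k) • ⁅aD 1, aD 0⁆ := by
    rw [ha0, ha1]; exact hyq
  have hT1 := T1' aD hRD hxD hyD
  have hQT := QTall aD hRD hxD hyD
  have hT3 := T3' aD hRD hxD hyD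
  -- values of Φ₀
  have Φα : Φ₀ α = A 0 := by rw [hαdef]; exact (Φ₀mk _).trans θ0
  have Φβ : Φ₀ β = A 1 := by rw [hβdef]; exact (Φ₀mk _).trans θ1
  have Φg : Φ₀ (gel (k := k) α β) = G 1 := by
    show Φ₀ ((2:k)⁻¹ • ⁅β, α⁆) = G 1
    rw [map_smul, LieHom.map_lie, Φα, Φβ, c10]
    exact inv_smul_smul₀ two_ne_zero _
  have ΦA : ∀ m : ℤ, Φ₀ (aD m) = A m := by
    refine intInd2 _ ?_ ?_ ?_ ?_
    · rw [ha0]; exact Φα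
    · rw [ha1]; exact Φβ
    · intro m hm hm1
      have hrec : aD (m+2) = aD m + ⁅gel (k := k) α β, aD (m+1)⁆ := by
        have h := gel_R k α β (m+1)
        rw [show m+1+1 = m+2 from by ring, show m+1-1 = m from by ring] at h
        rw [h]; abel
      rw [hrec, map_add, LieHom.map_lie, Φg, hm1, hm, hGA 1 (m+1) (by norm_num)]
      rw [show m+1+1 = m+2 from by ring, show m+1-1 = m from by ring]
      abel
    · intro m hm hm1
      have hrec : aD (m-1) = aD (m+1) - ⁅gel (k := k) α β, aD m⁆ := by
        have h := gel_R k α β m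
        rw [h]; abel
      rw [hrec, map_sub, LieHom.map_lie, Φg, hm1, hm, hGA 1 m (by norm_num)]
      abel
  have ΦG : ∀ l : ℤ, 0 < l → Φ₀ ((2:k)⁻¹ • ⁅aD l, aD 0⁆) = G l := by
    intro l hl
    rw [map_smul, LieHom.map_lie, ΦA, ΦA, hAA l 0 hl, show l - 0 = l from by ring]
    exact inv_smul_smul₀ two_ne_zero _
  -- the inverse linear map
  set v : (ℤ ⊕ {l : ℤ // 0 < l}) → DGAlgebra k :=
    Sum.elim aD (fun l => (2:k)⁻¹ • ⁅aD l.1, aD 0⁆) with hv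
  set Ψ : O →ₗ[k] DGAlgebra k := bas.constr k v with hΨ
  have Ψbas : ∀ i, Ψ (bas i) = v i := fun i => bas.constr_basis k v i
  have basA : ∀ m : ℤ, bas (Sum.inl m) = A m := by
    intro m; have h := hbas (Sum.inl m); simpa using h
  have basG : ∀ l : {l : ℤ // 0 < l}, bas (Sum.inr l) = G l.1 := by
    intro l; have h := hbas (Sum.inr l); simpa using h
  have ΨA : ∀ m : ℤ, Ψ (A m) = aD m := by
    intro m; rw [← basA m, Ψbas]; rfl
  have ΨG : ∀ (l : ℤ) (hl : 0 < l), Ψ (G l) = (2:k)⁻¹ • ⁅aD l, aD 0⁆ := by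
    intro l hl; rw [← basG ⟨l, hl⟩, Ψbas]; rfl
  -- right inverse
  have rinv : ∀ o : O, Φ₀ (Ψ o) = o := by
    have h : Φlin ∘ₗ Ψ = LinearMap.id := by
      refine bas.ext fun i => ?_
      rw [LinearMap.comp_apply, LinearMap.id_apply, Ψbas]
      cases i with
      | inl m =>
        rw [basA m]
        show Φ₀ (aD m) = A m
        exact ΦA m
      | inr l =>
        rw [basG l]
        show Φ₀ ((2:k)⁻¹ • ⁅aD l.1, aD 0⁆) = G l.1
        exact ΦG l.1 l.2
    intro o
    exact LinearMap.congr_fun h o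
  -- spanning
  set S : Submodule k (DGAlgebra k) := Submodule.span k (Set.range v) with hS
  have hvmem : ∀ i, v i ∈ S := fun i => Submodule.subset_span (Set.mem_range_self i)
  have haDmem : ∀ m, aD m ∈ S := fun m => hvmem (Sum.inl m)
  have hWmem : ∀ d : ℤ, ⁅aD d, aD 0⁆ ∈ S := by
    intro d
    rcases lt_trichotomy 0 d with hd | hd | hd
    · rw [show ⁅aD d, aD 0⁆ = (2:k) • ((2:k)⁻¹ • ⁅aD d, aD 0⁆) from
        (smul_inv_smul₀ two_ne_zero _).symm]
      exact S.smul_mem _ (hvmem (Sum.inr ⟨d, hd⟩))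
    · rw [← hd, lie_self]; exact S.zero_mem
    · rw [sk aD d 0, hT1 0 d, show (0:ℤ) - d = -d from by ring]
      refine S.neg_mem ?_
      rw [show ⁅aD (-d), aD 0⁆ = (2:k) • ((2:k)⁻¹ • ⁅aD (-d), aD 0⁆) from
        (smul_inv_smul₀ two_ne_zero _).symm]
      exact S.smul_mem _ (hvmem (Sum.inr ⟨-d, by omega⟩))
  have hlie : ∀ z w : DGAlgebra k, z ∈ S → w ∈ S → ⁅z, w⁆ ∈ S := by
    intro z w hz hw
    induction hz, hw using Submodule.span_induction₂ with
    | mem_mem u u' hu hu' =>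
      rcases hu with ⟨i, rfl⟩
      rcases hu' with ⟨j, rfl⟩
      rcases i with m | d <;> rcases j with m' | e
      · show ⁅aD m, aD m'⁆ ∈ S
        rw [hT1 m m']
        exact hWmem _
      · show ⁅aD m, (2:k)⁻¹ • ⁅aD e.1, aD 0⁆⁆ ∈ S
        have h1 : ⁅aD m, (2:k)⁻¹ • ⁅aD e.1, aD 0⁆⁆
            = -((2:k)⁻¹ • ((2:k) • aD (m + e.1) - (2:k) • aD (m - e.1))) := by
          rw [lie_smul, show ⁅aD m, ⁅aD e.1, aD 0⁆⁆ = -⁅⁅aD e.1, aD 0⁆, aD m⁆ from by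
            rw [← lie_skew], hQT e.1 e.2.le m]
          module
        rw [h1]
        exact S.neg_mem (S.smul_mem _ (S.sub_mem (S.smul_mem _ (haDmem _))
          (S.smul_mem _ (haDmem _))))
      · show ⁅(2:k)⁻¹ • ⁅aD d.1, aD 0⁆, aD m'⁆ ∈ S
        rw [smul_lie, hQT d.1 d.2.le m']
        exact S.smul_mem _ (S.sub_mem (S.smul_mem _ (haDmem _)) (S.smul_mem _ (haDmem _)))
      · show ⁅(2:k)⁻¹ • ⁅aD d.1, aD 0⁆, (2:k)⁻¹ • ⁅aD e.1, aD 0⁆⁆ ∈ S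
        rw [smul_lie, lie_smul, hT3 d.1 e.1 d.2.le, smul_zero, smul_zero]
        exact S.zero_mem
    | zero_left w' hw' => rw [zero_lie]; exact S.zero_mem
    | zero_right z' hz' => rw [lie_zero]; exact S.zero_mem
    | add_left x y z' hx hy hz' ihx ihy => rw [add_lie]; exact S.add_mem ihx ihy
    | add_right x y z' hx hy hz' ihx ihy => rw [lie_add]; exact S.add_mem ihx ihy
    | smul_left r x y' hx hy' ih => rw [smul_lie]; exact S.smul_mem _ ih
    | smul_right r x y' hx hy' ih => rw [lie_smul]; exact S.smul_mem _ ih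
  -- every element lies in S
  have hz_span : ∀ z : DGAlgebra k, z ∈ S := by
    let mkQlin : FreeLieAlgebra k (Fin 2) →ₗ[k] DGAlgebra k := (DGideal k).toSubmodule.mkQ
    let T : LieSubalgebra k (FreeLieAlgebra k (Fin 2)) :=
      { Submodule.comap mkQlin S with
        lie_mem' := by
          intro p q hp hq
          change mkQlin p ∈ S at hp; change mkQlin q ∈ S at hq
          show mkQlin ⁅p, q⁆ ∈ S
          have hmk : mkQlin ⁅p, q⁆ = ⁅mkQlin p, mkQlin q⁆ :=
            LieSubmodule.Quotient.mk_bracket (I := DGideal k) p q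
          rw [hmk]
          exact hlie _ _ hp hq }
    have hofT : ∀ i : Fin 2, FreeLieAlgebra.of k i ∈ T := by
      intro i
      fin_cases i
      · show mkQlin (FreeLieAlgebra.of k (0 : Fin 2)) ∈ S
        have : mkQlin (FreeLieAlgebra.of k (0 : Fin 2)) = α := rfl
        rw [this, ← ha0]; exact haDmem 0
      · show mkQlin (FreeLieAlgebra.of k (1 : Fin 2)) ∈ S
        have : mkQlin (FreeLieAlgebra.of k (1 : Fin 2)) = β := rfl
        rw [this, ← ha1]; exact haDmem 1
    have hTop : ∀ w, w ∈ T := by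
      let f : FreeLieAlgebra k (Fin 2) →ₗ⁅k⁆ T :=
        FreeLieAlgebra.lift k (fun i => (⟨FreeLieAlgebra.of k i, hofT i⟩ : T))
      have hcomp : T.incl.comp f = LieHom.id := by
        refine FreeLieAlgebra.hom_ext fun i => ?_
        rw [LieHom.comp_apply]
        rw [FreeLieAlgebra.lift_of_apply]
        rfl
      intro w
      have h2 : T.incl (f w) = w := by rw [← LieHom.comp_apply, hcomp]; rfl
      rw [← h2]
      exact (f w).2
    intro z
    obtain ⟨w, rfl⟩ := Submodule.Quotient.mk_surjective _ z
    exact Submodule.mem_comap.mp (hTop w)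
  -- left inverse
  have linv : ∀ z : DGAlgebra k, Ψ (Φ₀ z) = z := by
    intro z
    induction hz_span z using Submodule.span_induction with
    | mem u hu =>
      rcases hu with ⟨i, rfl⟩
      rcases i with m | d
      · show Ψ (Φ₀ (aD m)) = aD m
        rw [ΦA m, ΨA m]
      · show Ψ (Φ₀ ((2:k)⁻¹ • ⁅aD d.1, aD 0⁆)) = (2:k)⁻¹ • ⁅aD d.1, aD 0⁆
        rw [ΦG d.1 d.2, ΨG d.1 d.2]
    | zero => rw [map_zero, map_zero]
    | add x y hx hy ihx ihy => rw [map_add, map_add, ihx, ihy]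
    | smul c x hx ih => rw [map_smul, map_smul, ih]
  refine ⟨{ Φ₀ with invFun := Ψ, left_inv := linv, right_inv := rinv }, ?_, ?_⟩
  · exact Φα
  · exact Φβ
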